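/- arXiv:1205.2773 — 3 statements merged into one kernel-verified Lean document; each statement's English description precedes it below -/
import Mathlib

section
/- Let ζ denote the Riemann zeta function and let η denote the Euler eta function, η(s) := (1 - 2^{1-s})·ζ(s). For every s = σ + it with σ < 1 and ζ(s) ≠ 0, one has Re(η'(s)/η(s)) < Re(ζ'(s)/ζ(s)). -/
open Complex

/-- The Euler eta function, `η(s) = (1 - 2^(1-s)) ζ(s)`. -/
noncomputable def eulerEta (s : ℂ) : ℂ :=
  (1 - (2 : ℂ) ^ (1 - s)) * riemannZeta s

theorem re_log_deriv_eta_lt_zeta (s : ℂ) (hs : s.re < 1) (hζ : riemannZeta s ≠ 0) :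
    (deriv eulerEta s / eulerEta s).re <
      (deriv riemannZeta s / riemannZeta s).re := by
  set w : ℂ := (2 : ℂ) ^ (1 - s) with hw
  have hw_abs : 1 < ‖w‖ := by
    have : ‖((2 : ℝ) : ℂ) ^ (1 - s)‖ = (2 : ℝ) ^ (1 - s).re :=
      Complex.norm_cpow_eq_rpow_re_of_pos (by norm_num) _
    rw [hw, show ((2 : ℂ)) = ((2 : ℝ) : ℂ) by norm_num, this]
    have h1 : 0 < (1 - s).re := by
      simp only [Complex.sub_re, Complex.one_re]; linarith
    exact (Real.one_lt_rpow_iff_of_pos (by norm_num)).mpr (Or.inl ⟨by norm_num, h1⟩)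
  have hfac : (1 : ℂ) - w ≠ 0 := by
    intro h
    have hw1 : w = 1 := by linear_combination -h
    simp [hw1] at hw_abs
  have hs1 : s ≠ 1 := by intro h; simp [h] at hs
  have hζd : DifferentiableAt ℂ riemannZeta s := differentiableAt_riemannZeta hs1
  have hwD : HasDerivAt (fun z : ℂ => (2 : ℂ) ^ (1 - z)) (-(w * Complex.log 2)) s := by
    have h1 : HasDerivAt (fun z : ℂ => (1 : ℂ) - z) (-1) s := by
      exact (hasDerivAt_id s).const_sub (1 : ℂ)
    have h2 : HasDerivAt (fun t : ℂ => (2 : ℂ) ^ t)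
        ((2 : ℂ) ^ (1 - s) * Complex.log 2) (1 - s) :=
      (hasStrictDerivAt_const_cpow (Or.inl (by norm_num))).hasDerivAt
    have := h2.comp s h1
    simpa [hw, Function.comp_def] using this.congr_deriv (by ring)
  have hηD : HasDerivAt eulerEta
      (w * Complex.log 2 * riemannZeta s + (1 - w) * deriv riemannZeta s) s := by
    have := ((hasDerivAt_const s (1 : ℂ)).sub hwD).mul hζd.hasDerivAt
    have h' : (0 - -(w * Complex.log 2)) * riemannZeta s + (1 - w) * deriv riemannZeta s
        = w * Complex.log 2 * riemannZeta s + (1 - w) * deriv riemannZeta s := by ring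
    exact this.congr_deriv (by rw [← h']; rfl)
  have key : deriv eulerEta s / eulerEta s
      = w * Complex.log 2 / (1 - w) + deriv riemannZeta s / riemannZeta s := by
    rw [hηD.deriv]
    unfold eulerEta
    rw [← hw]
    field_simp
  have hlog2 : Complex.log 2 = (Real.log 2 : ℂ) := by
    rw [show (2 : ℂ) = ((2 : ℝ) : ℂ) by norm_num, Complex.ofReal_log (by norm_num)]
  have hneg : (w * Complex.log 2 / (1 - w)).re < 0 := by
    have heq : w * Complex.log 2 / (1 - w) = (Real.log 2 : ℂ) * (w / (1 - w)) := by
      rw [hlog2]; ring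
    rw [heq, Complex.re_ofReal_mul]
    have hdivre : (w / (1 - w)).re < 0 := by
      rw [Complex.div_re]
      have hns : 0 < Complex.normSq (1 - w) := Complex.normSq_pos.mpr hfac
      have hnum : w.re * (1 - w).re + w.im * (1 - w).im < 0 := by
        have h1 : w.re ≤ ‖w‖ := Complex.re_le_norm w
        have h2 : ‖w‖ < Complex.normSq w := by
          have h := Complex.sq_norm w
          nlinarith
        have h3 : Complex.normSq w = w.re * w.re + w.im * w.im := Complex.normSq_apply w
        simp only [Complex.sub_re, Complex.sub_im, Complex.one_re, Complex.one_im]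
        nlinarith
      have := div_neg_of_neg_of_pos hnum hns
      calc w.re * (1 - w).re / Complex.normSq (1 - w) + w.im * (1 - w).im / Complex.normSq (1 - w)
          = (w.re * (1 - w).re + w.im * (1 - w).im) / Complex.normSq (1 - w) := by ring
        _ < 0 := this
    have hlpos : 0 < Real.log 2 := Real.log_pos (by norm_num)
    exact mul_neg_of_pos_of_neg hlpos hdivre
  rw [key, Complex.add_re]
  linarith
end

section
/- For every s = σ + it with σ < 1/2 and |t| ≥ 8, one has Re(1/(s-1) + (1/2)·Ψ(s/2 + 1)) - (1/2)·log π > 0. -/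
set_option maxHeartbeats 1000000

open Complex Real

/-- The _root_.digamma function `Ψ(s) = Γ'(s)/Γ(s)`. -/
noncomputable def digamma (s : ℂ) : ℂ :=
  deriv Complex.Gamma s / Complex.Gamma s

section Aux
open Complex Real Filter Topology Set MeasureTheory

lemma pade_hasDeriv {t : ℝ} (h0t : 0 < t) : HasDerivAt (fun y : ℝ => Real.log y - 2 * (y - 1) / (y + 1))
    (t⁻¹ - (2 * (t+1) - 2*(t-1)) / (t+1)^2) t := by
  have h1t : (0:ℝ) < t + 1 := by linarith
  have := (Real.hasDerivAt_log h0t.ne').sub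
    ((((hasDerivAt_id t).sub_const 1).const_mul 2).div
      ((hasDerivAt_id t).add_const 1) h1t.ne')
  refine this.congr_deriv ?_
  simp

/-- Padé lower bound for log. -/

lemma pade_log {x : ℝ} (hx : 1 ≤ x) : 2 * (x - 1) / (x + 1) ≤ Real.log x := by
  have mono : MonotoneOn (fun y : ℝ => Real.log y - 2 * (y - 1) / (y + 1)) (Set.Ici 1) := by
    apply monotoneOn_of_deriv_nonneg (convex_Ici 1)
    · apply ContinuousOn.sub
      · exact fun t ht => (Real.continuousAt_log (by simp at ht; positivity)).continuousWithinAt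
      · apply ContinuousOn.div (by fun_prop) (by fun_prop)
        intro t ht; simp at ht; positivity
    · intro t ht
      simp only [interior_Ici, Set.mem_Ioi] at ht
      exact (pade_hasDeriv (by linarith)).differentiableAt.differentiableWithinAt
    · intro t ht
      simp only [interior_Ici, Set.mem_Ioi] at ht
      have h0t : (0:ℝ) < t := by linarith
      rw [(pade_hasDeriv h0t).deriv]
      rw [sub_nonneg, div_le_iff₀ (by positivity), inv_mul_eq_div, le_div_iff₀ h0t]
      nlinarith [sq_nonneg (t-1)]
  have := mono (Set.mem_Ici.mpr le_rfl) (Set.mem_Ici.mpr hx) hx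
  simp only [Real.log_one] at this
  linarith

/-- log lower bound `1 - 1/x ≤ log x`. -/

lemma log_ge_one_sub_inv {x : ℝ} (hx : 0 < x) : 1 - 1/x ≤ Real.log x := by
  have h := Real.log_le_sub_one_of_pos (show (0:ℝ) < 1/x by positivity)
  rw [Real.log_div one_ne_zero hx.ne', Real.log_one] at h
  linarith

/-- the comparison function `f u = u / (u^2+16)`. -/

noncomputable def fcomp (u : ℝ) : ℝ := u / (u^2 + 16)

lemma fcomp_le_eighth (u : ℝ) : fcomp u ≤ 1/8 := by
  rw [fcomp, div_le_iff₀ (by positivity)]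
  nlinarith [sq_nonneg (u - 4)]

lemma fcomp_mono {a b : ℝ} (ha : 0 ≤ a) (hab : a ≤ b) (hb : b ≤ 4) : fcomp a ≤ fcomp b := by
  rw [fcomp, fcomp, div_le_div_iff₀ (by positivity) (by positivity)]
  have h16 : a*b ≤ 16 := by nlinarith
  nlinarith [mul_nonneg (sub_nonneg.2 hab) (sub_nonneg.2 h16)]

lemma fcomp_nonneg {u : ℝ} (hu : 0 ≤ u) : 0 ≤ fcomp u := by
  rw [fcomp]; positivity

/-- one-step integral-type bound -/

lemma fcomp_step {b : ℝ} (hb : 4 ≤ b) :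
    fcomp (b+1) ≤ (Real.log ((b+1)^2+16) - Real.log (b^2+16)) / 2 := by
  have hA : (0:ℝ) < b^2+16 := by positivity
  have hB : (0:ℝ) < (b+1)^2+16 := by nlinarith
  have hx : (1:ℝ) ≤ ((b+1)^2+16) / (b^2+16) := by
    rw [le_div_iff₀ hA]; nlinarith
  have h := pade_log hx
  rw [Real.log_div hB.ne' hA.ne'] at h
  have key : fcomp (b+1) ≤ (2 * (((b+1)^2+16) / (b^2+16) - 1) / (((b+1)^2+16) / (b^2+16) + 1)) / 2 := by
    have hrw : (2 * (((b+1)^2+16) / (b^2+16) - 1) / (((b+1)^2+16) / (b^2+16) + 1)) / 2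
        = (((b+1)^2+16) - (b^2+16)) / (((b+1)^2+16) + (b^2+16)) := by
      have hXA : (0:ℝ) < ((b+1)^2+16) + (b^2+16) := by positivity
      rw [div_eq_div_iff (by positivity) hXA.ne']
      field_simp
    rw [hrw, fcomp, div_le_div_iff₀ (by positivity) (by positivity)]
    nlinarith
  calc fcomp (b+1) ≤ _ := key
    _ ≤ _ := by linarith

/-- tail sum bound -/

lemma fcomp_tail {a : ℝ} (ha : 4 ≤ a) (N : ℕ) :
    ∑ j ∈ Finset.range N, fcomp (a + 1 + j) ≤ (Real.log ((a+N)^2+16) - Real.log (a^2+16)) / 2 := by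
  induction N with
  | zero => simp
  | succ N ih =>
    rw [Finset.sum_range_succ]
    have hb : (4:ℝ) ≤ a + N := by
      have : (0:ℝ) ≤ N := Nat.cast_nonneg N
      linarith
    have step := fcomp_step hb
    have : a + 1 + (N:ℝ) = (a + N) + 1 := by push_cast; ring
    rw [this]
    push_cast
    calc ∑ j ∈ Finset.range N, fcomp (a + 1 + j) + fcomp (a + N + 1)
        ≤ (Real.log ((a+N)^2+16) - Real.log (a^2+16)) / 2
          + (Real.log ((a+N+1)^2+16) - Real.log ((a+N)^2+16)) / 2 := by
          exact add_le_add ih step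
      _ = (Real.log ((a+(N+1))^2+16) - Real.log (a^2+16)) / 2 := by ring_nf

lemma log_ge_one_sub_inv' {x : ℝ} (hx : 0 < x) : 1 - 1/x ≤ Real.log x := by
  have h := Real.log_le_sub_one_of_pos (show (0:ℝ) < 1/x by positivity)
  rw [Real.log_div one_ne_zero hx.ne', Real.log_one] at h
  linarith

lemma L32_lb : (3.46573590:ℝ) ≤ Real.log 32 := by
  have h : (32:ℝ) = 2^5 := by norm_num
  rw [h, Real.log_pow]
  have := Real.log_two_gt_d9
  push_cast
  linarith

lemma L3625_lb : (3.58297:ℝ) ≤ Real.log 36.25 := by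
  have h : (36.25:ℝ) = 32 * (145/128) := by norm_num
  rw [h, Real.log_mul (by norm_num) (by norm_num)]
  have h1 := L32_lb
  have h2 : 1 - 1/((145:ℝ)/128) ≤ Real.log (145/128) := log_ge_one_sub_inv' (by norm_num)
  norm_num at h2 ⊢
  linarith

lemma logpi_ub : Real.log π < 1.14501 := by
  have hpi8 : π^8 < 9489 := by
    calc π^8 ≤ 3.141593^8 := by
          gcongr
          · exact Real.pi_lt_d6.le
      _ < 9489 := by norm_num
  have h1 : 8 * Real.log π ≤ Real.log 9489 := by
    rw [show (8:ℝ) * Real.log π = Real.log (π^8) by rw [Real.log_pow]; push_cast; ring]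
    exact Real.log_le_log (by positivity) hpi8.le
  have h2 : Real.log 9489 ≤ Real.log 9216 + 273/9216 := by
    rw [show (9489:ℝ) = 9216 * (9489/9216) by norm_num,
      Real.log_mul (by norm_num) (by norm_num)]
    have := Real.log_le_sub_one_of_pos (show (0:ℝ) < 9489/9216 by norm_num)
    norm_num at this ⊢
    linarith
  have h3 : Real.log 9216 ≤ 13 * Real.log 2 + (1/32+1/33+1/34+1/35) := by
    have e2 : (9216:ℝ) = 2^13 * ((33/32)*(34/33)*(35/34)*(36/35)) := by norm_num
    rw [e2, Real.log_mul (by norm_num) (by norm_num), Real.log_pow,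
      Real.log_mul (by norm_num) (by norm_num), Real.log_mul (by norm_num) (by norm_num),
      Real.log_mul (by norm_num) (by norm_num)]
    have b1 := Real.log_le_sub_one_of_pos (show (0:ℝ) < 33/32 by norm_num)
    have b2 := Real.log_le_sub_one_of_pos (show (0:ℝ) < 34/33 by norm_num)
    have b3 := Real.log_le_sub_one_of_pos (show (0:ℝ) < 35/34 by norm_num)
    have b4 := Real.log_le_sub_one_of_pos (show (0:ℝ) < 36/35 by norm_num)
    push_cast
    norm_num at b1 b2 b3 b4 ⊢
    linarith
  have hlog2 := Real.log_two_lt_d9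
  norm_num at h2 h3 ⊢
  nlinarith

lemma tendsto_log_ratio (c : ℝ) :
    Tendsto (fun n : ℕ => Real.log n - Real.log ((c+n)^2+16) / 2) atTop (𝓝 0) := by
  have h0 : Tendsto (fun n : ℕ => (n:ℝ)⁻¹) atTop (𝓝 0) :=
    tendsto_inv_atTop_zero.comp tendsto_natCast_atTop_atTop
  have h1 : Tendsto (fun n : ℕ => ((c+n)^2+16) / (n:ℝ)^2) atTop (𝓝 1) := by
    have key : Tendsto (fun n : ℕ => (c * (n:ℝ)⁻¹ + 1)^2 + 16 * ((n:ℝ)⁻¹)^2) atTop (𝓝 1) := by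
      have : Tendsto (fun n : ℕ => (c * (n:ℝ)⁻¹ + 1)^2 + 16 * ((n:ℝ)⁻¹)^2) atTop
          (𝓝 ((c * 0 + 1)^2 + 16 * 0^2)) := by
        apply Tendsto.add
        · exact (((h0.const_mul c).add_const 1).pow 2)
        · exact (h0.pow 2).const_mul 16
      simpa using this
    apply key.congr'
    filter_upwards [eventually_ge_atTop 1] with n hn
    have hn0 : (n:ℝ) ≠ 0 := by positivity
    field_simp
  have h2 : Tendsto (fun n : ℕ => Real.log (((c+n)^2+16) / (n:ℝ)^2)) atTop (𝓝 0) := by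
    have := (Real.continuousAt_log one_ne_zero).tendsto.comp h1
    simpa [Function.comp_def] using this
  have h3 : Tendsto (fun n : ℕ => -(Real.log (((c+n)^2+16) / (n:ℝ)^2)) / 2) atTop (𝓝 0) := by
    simpa using (h2.neg.div_const 2)
  apply h3.congr'
  filter_upwards [eventually_ge_atTop 1] with n hn
  have hn0 : (0:ℝ) < (n:ℝ) := by positivity
  have hq : (0:ℝ) < (c+n)^2+16 := by positivity
  rw [Real.log_div hq.ne' (by positivity), Real.log_pow]
  push_cast
  ring

lemma g_le_f {y u : ℝ} (hy : 16 ≤ y^2) (hu : 0 ≤ u) : u/(u^2+y^2) ≤ u/(u^2+16) := by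
  gcongr

lemma g_nonpos {y u : ℝ} (hy : 16 ≤ y^2) (hu : u ≤ 0) : u/(u^2+y^2) ≤ 0 := by
  apply div_nonpos_of_nonpos_of_nonneg hu (by positivity)

lemma g_pair {y a h : ℝ} (hy : 16 ≤ y^2) (ha : 0 ≤ a) (hh : 0 ≤ h) :
    (a+h)/((a+h)^2+y^2) ≤ a/(a^2+y^2) + h/y^2 := by
  have hy0 : (0:ℝ) < y^2 := by linarith
  have hA : (0:ℝ) < a^2+y^2 := by positivity
  have hB : (0:ℝ) < (a+h)^2+y^2 := by positivity
  rw [div_add_div _ _ hA.ne' hy0.ne', div_le_div_iff₀ hB (by positivity)]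
  nlinarith [mul_nonneg (mul_nonneg ha hy0.le) (mul_nonneg hh (show (0:ℝ) ≤ 2*a+h by linarith)),
    mul_nonneg (mul_nonneg hh hA.le) (sq_nonneg (a+h))]

/-- key pointwise approximation bound -/

lemma exp_approx_bound {n : ℕ} (hn : 1 ≤ n) {x : ℝ} (hx : 0 ≤ x) (hxn : x ≤ n) :
    0 ≤ Real.exp (-x) - (1 - x/n)^n ∧
      Real.exp (-x) - (1 - x/n)^n ≤ x^2 * Real.exp (-x) / n := by
  have hn0 : (0:ℝ) < n := by exact_mod_cast hn
  set t : ℝ := x / n with ht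
  have ht0 : 0 ≤ t := by positivity
  have ht1 : t ≤ 1 := by rw [ht, div_le_one hn0]; exact hxn
  have hnt : (n:ℝ) * t = x := by rw [ht]; field_simp
  have hexp : (Real.exp (-t))^n = Real.exp (-x) := by
    rw [← Real.exp_nat_mul, show (n:ℝ) * -t = -x by rw [← hnt]; ring]
  have upper : (1 - t)^n ≤ Real.exp (-x) := by
    have h1 : 1 - t ≤ Real.exp (-t) := by
      have := Real.add_one_le_exp (-t); linarith
    calc (1-t)^n ≤ (Real.exp (-t))^n := pow_le_pow_left₀ (by linarith) h1 n
      _ = Real.exp (-x) := hexp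
  have lower : Real.exp (-x) * (1 - x^2/n) ≤ (1 - t)^n := by
    have step1 : Real.exp (-t) * (1 - t^2) ≤ 1 - t := by
      have h2 : (1+t) * Real.exp (-t) ≤ 1 := by
        have h3 := Real.add_one_le_exp t
        have h4 : (t+1) * Real.exp (-t) ≤ Real.exp t * Real.exp (-t) :=
          mul_le_mul_of_nonneg_right h3 (Real.exp_nonneg _)
        rwa [← Real.exp_add, add_neg_cancel, Real.exp_zero, add_comm t 1] at h4
      have h5 : (1-t) * ((1+t) * Real.exp (-t)) ≤ (1-t) * 1 :=
        mul_le_mul_of_nonneg_left h2 (by linarith)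
      calc Real.exp (-t) * (1 - t^2) = (1-t)*((1+t)*Real.exp (-t)) := by ring
        _ ≤ 1 - t := by linarith
    have hnn : 0 ≤ Real.exp (-t) * (1 - t^2) :=
      mul_nonneg (Real.exp_nonneg _) (by nlinarith)
    have step2 : (Real.exp (-t) * (1 - t^2))^n ≤ (1-t)^n := pow_le_pow_left₀ hnn step1 n
    have step3 : (Real.exp (-t) * (1 - t^2))^n = Real.exp (-x) * ((1-t^2))^n := by
      rw [mul_pow, hexp]
    have step4 : 1 - x^2/n ≤ (1-t^2)^n := by
      have := one_add_mul_le_pow (show (-2:ℝ) ≤ -t^2 by nlinarith) n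
      have ht2 : (n:ℝ) * t^2 = x^2/n := by
        rw [ht]; field_simp
      calc 1 - x^2/n = 1 + (n:ℝ) * (-t^2) := by rw [mul_neg, ht2]; ring
        _ ≤ (1 + -t^2)^n := this
        _ = (1 - t^2)^n := by ring_nf
    calc Real.exp (-x) * (1 - x^2/n) ≤ Real.exp (-x) * (1-t^2)^n :=
          mul_le_mul_of_nonneg_left step4 (Real.exp_nonneg _)
      _ = (Real.exp (-t) * (1 - t^2))^n := step3.symm
      _ ≤ (1-t)^n := step2
  constructor
  · linarith
  · have : Real.exp (-x) - (1-t)^n ≤ Real.exp (-x) - Real.exp (-x) * (1 - x^2/n) := by linarith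
    calc Real.exp (-x) - (1 - x/n)^n ≤ Real.exp (-x) - Real.exp (-x) * (1 - x^2/n) := this
      _ = x^2 * Real.exp (-x) / n := by field_simp; ring

/-- derivative of GammaSeq -/

lemma hasDerivAt_gammaSeq {n : ℕ} (hn : 1 ≤ n) {w : ℂ} (hw : ∀ j ∈ Finset.range (n+1), w + (j:ℕ) ≠ 0) :
    HasDerivAt (fun z => Complex.GammaSeq z n)
      (Complex.GammaSeq w n * (Complex.log n - ∑ j ∈ Finset.range (n+1), (w + (j:ℕ))⁻¹)) w := by
  classical
  set P : ℂ → ℂ := fun z => ∏ j ∈ Finset.range (n+1), (z + (j:ℕ)) with hPdef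
  have hP0 : P w ≠ 0 := by
    rw [hPdef]
    exact Finset.prod_ne_zero_iff.mpr hw
  have hP : HasDerivAt P (∑ j ∈ Finset.range (n+1), ∏ k ∈ (Finset.range (n+1)).erase j, (w + (k:ℕ))) w := by
    have := HasDerivAt.finset_prod (u := Finset.range (n+1))
      (f := fun j z => z + (j:ℕ)) (f' := fun j => 1) (x := w)
      (fun j _ => by simpa using (hasDerivAt_id w).add_const (j:ℂ))
    rw [show P = ∏ i ∈ Finset.range (n+1), fun z => z + ((i:ℕ):ℂ) from by
      ext z; simp [hPdef, Finset.prod_apply]]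
    simpa using this
  have hPsum : (∑ j ∈ Finset.range (n+1), ∏ k ∈ (Finset.range (n+1)).erase j, (w + (k:ℕ)))
      = P w * ∑ j ∈ Finset.range (n+1), (w + (j:ℕ))⁻¹ := by
    rw [Finset.mul_sum]
    apply Finset.sum_congr rfl
    intro j hj
    have hme := Finset.mul_prod_erase (Finset.range (n+1)) (fun k => w + (k:ℕ)) hj
    have hj0 : w + (j:ℕ) ≠ 0 := hw j hj
    simp only [hPdef]
    rw [← hme, mul_comm (w + (j:ℕ)), mul_assoc, mul_inv_cancel₀ hj0, mul_one]
  have hn0 : (n:ℂ) ≠ 0 := Nat.cast_ne_zero.mpr (by omega)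
  have hTop : HasDerivAt (fun z => (n:ℂ)^z * (n.factorial : ℂ))
      ((n:ℂ)^w * Complex.log n * (n.factorial : ℂ)) w := by
    simpa using ((hasDerivAt_id w).const_cpow (Or.inl hn0)).mul_const (n.factorial : ℂ)
  have hInv : HasDerivAt (fun z => (P z)⁻¹)
      (-(P w * ∑ j ∈ Finset.range (n+1), (w + (j:ℕ))⁻¹) / (P w)^2) w := by
    have := hP.inv hP0
    rwa [hPsum] at this
  have hfull := hTop.mul hInv
  have heq : (fun z => Complex.GammaSeq z n) = fun z => ((n:ℂ)^z * (n.factorial:ℂ)) * (P z)⁻¹ := by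
    funext z
    rw [Complex.GammaSeq, div_eq_mul_inv, hPdef]
  rw [heq]
  refine hfull.congr_deriv ?_
  simp only [Complex.GammaSeq, hPdef]
  field_simp
  ring

lemma gamma_seq_approx {a b : ℝ} (ha : 1 < a) {w : ℂ} (hw1 : a ≤ w.re) (hw2 : w.re ≤ b)
    {n : ℕ} (hn : 1 ≤ n) :
    ‖Complex.Gamma w - Complex.GammaSeq w n‖ ≤
      (Real.Gamma (a+2) + Real.Gamma (b+2))/n + ∫ x in Ioi (n:ℝ), Real.exp (-x) * x ^ (b-1) := by
  have hw0 : (0:ℝ) < w.re := by linarith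
  have hn0 : (0:ℝ) < n := by exact_mod_cast hn
  set σ := w.re with hσ
  -- the two integrands
  set F : ℝ → ℂ := fun x => ↑(Real.exp (-x)) * (x:ℂ) ^ (w - 1) with hF
  set P : ℝ → ℂ := fun x => ↑((1 - x/n)^n) * (x:ℂ) ^ (w - 1) with hP
  have hFint : IntegrableOn F (Ioi 0) := Complex.GammaIntegral_convergent hw0
  have hFiocInt : IntegrableOn F (Ioc 0 n) := hFint.mono_set Ioc_subset_Ioi_self
  have hFioiInt : IntegrableOn F (Ioi (n:ℝ)) := hFint.mono_set (Ioi_subset_Ioi hn0.le)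
  -- ‖F x‖ on Ioi 0
  have hwre : (w - 1).re = σ - 1 := by simp [hσ, Complex.sub_re]
  have habs : ∀ (r x : ℝ), 0 < x → ‖(r:ℂ) * (x:ℂ)^(w-1)‖ = |r| * x ^ (σ - 1) := by
    intro r x hx
    rw [norm_mul, Complex.norm_real, Real.norm_eq_abs,
      Complex.norm_cpow_eq_rpow_re_of_pos hx, hwre]
  have hFnorm : ∀ x : ℝ, 0 < x → ‖F x‖ = Real.exp (-x) * x ^ (σ - 1) := by
    intro x hx
    rw [hF, habs _ _ hx, _root_.abs_of_nonneg (Real.exp_nonneg _)]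
  -- integrability of P on Ioc 0 n
  have hPbound : ∀ x ∈ Ioc (0:ℝ) n, ‖P x‖ ≤ Real.exp (n:ℝ) * ‖F x‖ := by
    intro x hx
    obtain ⟨hx0, hxn⟩ := hx
    have h01 : 0 ≤ 1 - x/n := by
      rw [sub_nonneg, div_le_one hn0]; exact hxn
    have h11 : (1 - x/n)^n ≤ 1 := by
      apply pow_le_one₀ h01; rw [sub_le_self_iff]; positivity
    have e1 : ‖P x‖ = (1-x/n)^n * x ^ (σ-1) := by
      rw [hP, habs _ _ hx0, _root_.abs_of_nonneg (pow_nonneg h01 n)]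
    have e2 : ‖F x‖ = Real.exp (-x) * x ^ (σ-1) := hFnorm x hx0
    rw [e1, e2]
    have hcmp : (1-x/n)^n ≤ Real.exp (n:ℝ) * Real.exp (-x) := by
      rw [← Real.exp_add]
      calc (1-x/n)^n ≤ 1 := h11
        _ ≤ Real.exp ((n:ℝ) + -x) := by
          apply Real.one_le_exp; linarith
    have hrpnn : (0:ℝ) ≤ x ^ (σ-1) := Real.rpow_nonneg hx0.le _
    calc (1-x/n)^n * x ^ (σ-1)
        ≤ (Real.exp (n:ℝ) * Real.exp (-x)) * x ^ (σ-1) :=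
          mul_le_mul_of_nonneg_right hcmp hrpnn
      _ = Real.exp (n:ℝ) * (Real.exp (-x) * x ^ (σ-1)) := by ring
  have hPmeas : AEStronglyMeasurable P (volume.restrict (Ioc (0:ℝ) n)) := by
    apply AEStronglyMeasurable.mul
    · exact (Complex.continuous_ofReal.comp (by continuity)).aestronglyMeasurable
    · have hFm := hFint.1.mono_set (Ioc_subset_Ioi_self : Ioc (0:ℝ) n ⊆ Ioi 0)
      -- extract measurability of cpow part: x^(w-1) = exp(x) * F x
      have : AEStronglyMeasurable (fun x : ℝ => ↑(Real.exp x) * F x) (volume.restrict (Ioc (0:ℝ) n)) := by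
        apply AEStronglyMeasurable.mul _ hFm
        exact (Complex.continuous_ofReal.comp Real.continuous_exp).aestronglyMeasurable
      apply this.congr
      filter_upwards [] with x
      rw [hF]
      rw [show (↑(Real.exp x) * (↑(Real.exp (-x)) * (x:ℂ) ^ (w - 1))) = ↑(Real.exp x * Real.exp (-x)) * (x:ℂ)^(w-1) by push_cast; ring]
      rw [← Real.exp_add, add_neg_cancel, Real.exp_zero]
      simp
  have hPint : IntegrableOn P (Ioc (0:ℝ) n) := by
    apply Integrable.mono' ((hFiocInt.norm).const_mul (Real.exp (n:ℝ))) hPmeas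
    filter_upwards [ae_restrict_mem measurableSet_Ioc] with x hx
    exact hPbound x hx
  -- GammaSeq as set integral
  have hSeq : Complex.GammaSeq w n = ∫ x in Ioc (0:ℝ) n, P x := by
    rw [Complex.GammaSeq_eq_approx_Gamma_integral hw0 (by omega), intervalIntegral.integral_of_le (by positivity)]
  -- Gamma as set integral and splitting
  have hGamma : Complex.Gamma w = (∫ x in Ioc (0:ℝ) n, F x) + ∫ x in Ioi (n:ℝ), F x := by
    rw [Complex.Gamma_eq_integral hw0, Complex.GammaIntegral]
    rw [← Ioc_union_Ioi_eq_Ioi hn0.le]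
    exact setIntegral_union (Ioc_disjoint_Ioi le_rfl) measurableSet_Ioi hFiocInt hFioiInt
  have hsplit : Complex.Gamma w - Complex.GammaSeq w n
      = (∫ x in Ioc (0:ℝ) n, (F x - P x)) + ∫ x in Ioi (n:ℝ), F x := by
    rw [hGamma, hSeq, integral_sub hFiocInt hPint]; ring
  rw [hsplit]
  have hmain : ‖∫ x in Ioc (0:ℝ) n, (F x - P x)‖ ≤ (Real.Gamma (a+2) + Real.Gamma (b+2))/n := by
    have hgint : IntegrableOn (fun x : ℝ => (Real.exp (-x) * x ^ (a+2-1) + Real.exp (-x) * x ^ (b+2-1))/n) (Ioi (0:ℝ)) := by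
      exact Integrable.div_const ((Real.GammaIntegral_convergent (by linarith)).add (Real.GammaIntegral_convergent (by linarith))) _
    have hbound : ∀ x ∈ Ioc (0:ℝ) n, ‖F x - P x‖ ≤ (Real.exp (-x) * x ^ (a+2-1) + Real.exp (-x) * x ^ (b+2-1))/n := by
      intro x hx
      obtain ⟨hx0, hxn⟩ := hx
      have hdiff : F x - P x = ↑(Real.exp (-x) - (1 - x/n)^n) * (x:ℂ) ^ (w-1) := by
        rw [hF, hP]; push_cast; ring
      obtain ⟨hd0, hd1⟩ := exp_approx_bound hn hx0.le hxn
      rw [hdiff]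
      rw [habs _ _ hx0, _root_.abs_of_nonneg hd0]
      have hrp : x^2 * Real.exp (-x) / n * x ^ (σ-1) = Real.exp (-x) * x ^ (σ+1) / n := by
        rw [show x ^ (σ+1) = x^(2:ℕ) * x^(σ-1) by
          rw [← Real.rpow_natCast x 2, ← Real.rpow_add hx0]; congr 1; ring]
        ring
      have hcmp : x ^ (σ+1) ≤ x ^ (a+1) + x ^ (b+1) := by
        rcases le_or_gt x 1 with hx1 | hx1
        · have h1 : x ^ (σ+1) ≤ x ^ (a+1) := Real.rpow_le_rpow_of_exponent_ge hx0 hx1 (by linarith)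
          have h2 : (0:ℝ) ≤ x ^ (b+1) := Real.rpow_nonneg hx0.le _
          linarith
        · have h1 : x ^ (σ+1) ≤ x ^ (b+1) := Real.rpow_le_rpow_of_exponent_le hx1.le (by linarith)
          have h2 : (0:ℝ) ≤ x ^ (a+1) := Real.rpow_nonneg hx0.le _
          linarith
      calc (Real.exp (-x) - (1-x/n)^n) * x ^ (σ-1)
          ≤ (x^2 * Real.exp (-x) / n) * x ^ (σ-1) := by
            apply mul_le_mul_of_nonneg_right hd1 (Real.rpow_nonneg hx0.le _)
        _ = Real.exp (-x) * x ^ (σ+1) / n := hrp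
        _ ≤ (Real.exp (-x) * x ^ (a+2-1) + Real.exp (-x) * x ^ (b+2-1))/n := by
            rw [div_le_div_iff_of_pos_right] <;> try positivity
            · have := mul_le_mul_of_nonneg_left hcmp (Real.exp_nonneg (-x))
              rw [show a+2-1 = a+1 by ring, show b+2-1 = b+1 by ring]
              linarith
    calc ‖∫ x in Ioc (0:ℝ) n, (F x - P x)‖
        ≤ ∫ x in Ioc (0:ℝ) n, (Real.exp (-x) * x ^ (a+2-1) + Real.exp (-x) * x ^ (b+2-1))/n := by
          apply norm_integral_le_of_norm_le (hgint.mono_set Ioc_subset_Ioi_self)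
          filter_upwards [ae_restrict_mem measurableSet_Ioc] with x hx
          exact hbound x hx
      _ ≤ ∫ x in Ioi (0:ℝ), (Real.exp (-x) * x ^ (a+2-1) + Real.exp (-x) * x ^ (b+2-1))/n := by
          apply setIntegral_mono_set hgint
          · filter_upwards [ae_restrict_mem measurableSet_Ioi] with x (hx : (0:ℝ) < x)
            positivity
          · exact HasSubset.Subset.eventuallyLE Ioc_subset_Ioi_self
      _ = (Real.Gamma (a+2) + Real.Gamma (b+2))/n := by
          rw [integral_div, integral_add (Real.GammaIntegral_convergent (by linarith)) (Real.GammaIntegral_convergent (by linarith)),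
            ← Real.Gamma_eq_integral (by linarith : (0:ℝ) < a+2), ← Real.Gamma_eq_integral (by linarith : (0:ℝ) < b+2)]
  have htail : ‖∫ x in Ioi (n:ℝ), F x‖ ≤ ∫ x in Ioi (n:ℝ), Real.exp (-x) * x ^ (b-1) := by
    apply norm_integral_le_of_norm_le
    · exact (Real.GammaIntegral_convergent (by linarith : (0:ℝ) < b)).mono_set (Ioi_subset_Ioi hn0.le)
    · filter_upwards [ae_restrict_mem measurableSet_Ioi] with x (hx : (n:ℝ) < x)
      have hx0 : (0:ℝ) < x := lt_of_le_of_lt hn0.le hx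
      rw [hFnorm x hx0]
      have hx1 : (1:ℝ) ≤ x := le_trans (by exact_mod_cast hn) hx.le
      have : x ^ (σ-1) ≤ x ^ (b-1) := Real.rpow_le_rpow_of_exponent_le hx1 (by linarith)
      have := mul_le_mul_of_nonneg_left this (Real.exp_nonneg (-x))
      linarith
  calc ‖(∫ x in Ioc (0:ℝ) n, (F x - P x)) + ∫ x in Ioi (n:ℝ), F x‖
      ≤ ‖∫ x in Ioc (0:ℝ) n, (F x - P x)‖ + ‖∫ x in Ioi (n:ℝ), F x‖ := norm_add_le _ _
    _ ≤ _ := add_le_add hmain htail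

lemma tail_tendsto {b : ℝ} (hb : 0 < b) :
    Tendsto (fun n : ℕ => ∫ x in Ioi (n:ℝ), Real.exp (-x) * x ^ (b-1)) atTop (𝓝 0) := by
  set G : ℝ → ℝ := fun x => Real.exp (-x) * x ^ (b-1) with hG
  have hGint : IntegrableOn G (Ioi 0) := Real.GammaIntegral_convergent hb
  have h1 : Tendsto (fun r : ℝ => ∫ x in (0:ℝ)..r, G x) atTop (𝓝 (∫ x in Ioi (0:ℝ), G x)) :=
    MeasureTheory.intervalIntegral_tendsto_integral_Ioi 0 hGint tendsto_id
  have h2 : Tendsto (fun n : ℕ => ∫ x in (0:ℝ)..(n:ℝ), G x) atTop (𝓝 (∫ x in Ioi (0:ℝ), G x)) :=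
    h1.comp tendsto_natCast_atTop_atTop
  have h3 : Tendsto (fun n : ℕ => (∫ x in Ioi (0:ℝ), G x) - ∫ x in (0:ℝ)..(n:ℝ), G x) atTop (𝓝 0) := by
    have := (tendsto_const_nhds (x := ∫ x in Ioi (0:ℝ), G x) (f := atTop (α := ℕ))).sub h2
    simpa using this
  apply h3.congr
  intro n
  have hsplit : (∫ x in Ioi (0:ℝ), G x) = (∫ x in Ioc (0:ℝ) (n:ℝ), G x) + ∫ x in Ioi (n:ℝ), G x := by
    rw [← Ioc_union_Ioi_eq_Ioi (Nat.cast_nonneg n : (0:ℝ) ≤ n)]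
    exact setIntegral_union (Ioc_disjoint_Ioi le_rfl) measurableSet_Ioi
      (hGint.mono_set Ioc_subset_Ioi_self)
      (hGint.mono_set (Ioi_subset_Ioi (Nat.cast_nonneg n)))
  rw [intervalIntegral.integral_of_le (Nat.cast_nonneg n), hsplit]
  ring

lemma gammaSeq_tlu : TendstoLocallyUniformlyOn (fun (n : ℕ) (z : ℂ) => Complex.GammaSeq z n)
    Complex.Gamma atTop {z : ℂ | 1 < z.re} := by
  have hUopen : IsOpen {z : ℂ | 1 < z.re} := isOpen_lt continuous_const continuous_re
  rw [tendstoLocallyUniformlyOn_iff_forall_isCompact hUopen]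
  intro K hKU hK
  rcases K.eq_empty_or_nonempty with rfl | hne
  · exact tendstoUniformlyOn_empty
  obtain ⟨wa, hwaK, hwa⟩ := hK.exists_isMinOn hne continuous_re.continuousOn
  obtain ⟨wb, hwbK, hwb⟩ := hK.exists_isMaxOn hne continuous_re.continuousOn
  set a := wa.re with hadef
  set b := wb.re with hbdef
  have ha : 1 < a := hKU hwaK
  have hb : 0 < b := by have := hwa hwbK; have : a ≤ b := this; linarith
  rw [Metric.tendstoUniformlyOn_iff]
  intro ε hε
  have h0 : Tendsto (fun n : ℕ => (Real.Gamma (a+2) + Real.Gamma (b+2))/(n:ℝ)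
      + ∫ x in Ioi (n:ℝ), Real.exp (-x) * x ^ (b-1)) atTop (𝓝 0) := by
    have hc : Tendsto (fun n : ℕ => (Real.Gamma (a+2) + Real.Gamma (b+2))/(n:ℝ)) atTop (𝓝 0) :=
      tendsto_const_div_atTop_nhds_zero_nat _
    have := hc.add (tail_tendsto hb)
    simpa using this
  filter_upwards [h0.eventually (eventually_lt_nhds hε), eventually_ge_atTop 1] with n h1 h2 w hwK
  rw [dist_eq_norm]
  calc ‖Complex.Gamma w - Complex.GammaSeq w n‖
      ≤ (Real.Gamma (a+2) + Real.Gamma (b+2))/(n:ℝ)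
        + ∫ x in Ioi (n:ℝ), Real.exp (-x) * x ^ (b-1) :=
        gamma_seq_approx ha (hwa hwK) (hwb hwK) h2
    _ < ε := h1

lemma gammaSeq_ne_zero {n : ℕ} (hn : 1 ≤ n) {w : ℂ}
    (hw : ∀ j ∈ Finset.range (n+1), w + (j:ℕ) ≠ 0) : Complex.GammaSeq w n ≠ 0 := by
  rw [Complex.GammaSeq]
  apply div_ne_zero
  · apply mul_ne_zero
    · rw [Complex.cpow_def_of_ne_zero (by exact_mod_cast Nat.cast_ne_zero.mpr (by omega))]
      exact Complex.exp_ne_zero _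
    · exact_mod_cast Nat.cast_ne_zero.mpr (Nat.factorial_ne_zero n)
  · exact Finset.prod_ne_zero_iff.mpr hw

lemma sum_ne_zero_of_re_pos {w : ℂ} (hw : 0 < w.re) (n : ℕ) :
    ∀ j ∈ Finset.range (n+1), w + (j:ℕ) ≠ 0 := by
  intro j _ hzero
  have : (w + (j:ℕ)).re = 0 := by rw [hzero]; simp
  rw [Complex.add_re, Complex.natCast_re] at this
  have := Nat.cast_nonneg (α := ℝ) j
  linarith

lemma tendsto_digamma_seq_of_one_lt_re {w : ℂ} (hw : 1 < w.re) :
    Tendsto (fun n : ℕ => Complex.log n - ∑ j ∈ Finset.range (n+1), (w + (j:ℕ))⁻¹)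
      atTop (𝓝 (_root_.digamma w)) := by
  have hw0 : 0 < w.re := by linarith
  have hUopen : IsOpen {z : ℂ | 1 < z.re} := isOpen_lt continuous_const continuous_re
  have hdiff : ∀ᶠ n in atTop, DifferentiableOn ℂ (fun z => Complex.GammaSeq z n) {z : ℂ | 1 < z.re} := by
    filter_upwards [eventually_ge_atTop 1] with n hn
    intro z hz
    exact (hasDerivAt_gammaSeq hn (sum_ne_zero_of_re_pos (by exact lt_trans one_pos hz) n)).differentiableAt.differentiableWithinAt
  have hderiv := (gammaSeq_tlu.deriv hdiff hUopen).tendsto_at (show w ∈ {z : ℂ | 1 < z.re} from hw)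
  have h1 : Tendsto (fun n : ℕ => Complex.GammaSeq w n *
      (Complex.log n - ∑ j ∈ Finset.range (n+1), (w + (j:ℕ))⁻¹)) atTop (𝓝 (deriv Complex.Gamma w)) := by
    apply hderiv.congr'
    filter_upwards [eventually_ge_atTop 1] with n hn
    exact (hasDerivAt_gammaSeq hn (sum_ne_zero_of_re_pos hw0 n)).deriv
  have h2 := Complex.GammaSeq_tendsto_Gamma w
  have hGne : Complex.Gamma w ≠ 0 := by
    apply Complex.Gamma_ne_zero
    intro m h
    rw [h] at hw
    simp only [Complex.neg_re, Complex.natCast_re] at hw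
    have := Nat.cast_nonneg (α := ℝ) m
    linarith
  have h3 := h1.div h2 hGne
  rw [show deriv Complex.Gamma w / Complex.Gamma w = _root_.digamma w from rfl] at h3
  apply h3.congr'
  filter_upwards [eventually_ge_atTop 1] with n hn
  simp only [Pi.div_apply]
  rw [mul_comm, mul_div_assoc, div_self (gammaSeq_ne_zero hn (sum_ne_zero_of_re_pos hw0 n)), mul_one]

lemma ne_neg_nat_of_im_ne {w : ℂ} (hw : w.im ≠ 0) : ∀ m : ℕ, w ≠ -m := by
  intro m h
  apply hw
  rw [h]
  simp

lemma digamma_add_one {w : ℂ} (hw : w.im ≠ 0) : _root_.digamma (w+1) = _root_.digamma w + w⁻¹ := by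
  have hw0 : w ≠ 0 := by intro h; apply hw; rw [h]; simp
  have hne := ne_neg_nat_of_im_ne hw
  have hne1 : ∀ m : ℕ, w + 1 ≠ -m := by
    intro m h
    apply hw
    have : w = -(m:ℂ) - 1 := by linear_combination h
    rw [this]; simp
  have hGne : Complex.Gamma w ≠ 0 := Complex.Gamma_ne_zero hne
  have hd1 : HasDerivAt Complex.Gamma (deriv Complex.Gamma w) w :=
    (Complex.differentiableAt_Gamma w hne).hasDerivAt
  have hd2 : HasDerivAt (fun z => Complex.Gamma (z+1)) (deriv Complex.Gamma (w+1)) w := by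
    have := (Complex.differentiableAt_Gamma (w+1) hne1).hasDerivAt
    exact this.comp_add_const
  have hd3 : HasDerivAt (fun z => z * Complex.Gamma z)
      (Complex.Gamma w + w * deriv Complex.Gamma w) w := by
    have := (hasDerivAt_id w).mul hd1
    refine this.congr_deriv ?_
    simp [add_comm]
  have heq : (fun z => Complex.Gamma (z+1)) =ᶠ[𝓝 w] (fun z => z * Complex.Gamma z) := by
    filter_upwards [eventually_ne_nhds hw0] with z hz
    exact Complex.Gamma_add_one z hz
  have hd2' : HasDerivAt (fun z => Complex.Gamma (z+1))
      (Complex.Gamma w + w * deriv Complex.Gamma w) w := by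
    exact hd3.congr_of_eventuallyEq heq
  have hderiv_eq : deriv Complex.Gamma (w+1) = Complex.Gamma w + w * deriv Complex.Gamma w :=
    hd2.unique hd2'
  rw [_root_.digamma, _root_.digamma, hderiv_eq, Complex.Gamma_add_one w hw0]
  field_simp
  ring

lemma tendsto_digamma_seq {w : ℂ} (hw : w.im ≠ 0) :
    Tendsto (fun n : ℕ => Complex.log n - ∑ j ∈ Finset.range (n+1), (w + (j:ℕ))⁻¹)
      atTop (𝓝 (_root_.digamma w)) := by
  obtain ⟨m, hm⟩ := exists_nat_gt (1 - w.re)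
  have claim : ∀ m : ℕ, ∀ w : ℂ, w.im ≠ 0 → 1 - w.re < m →
      Tendsto (fun n : ℕ => Complex.log n - ∑ j ∈ Finset.range (n+1), (w + (j:ℕ))⁻¹)
        atTop (𝓝 (_root_.digamma w)) := by
    intro m
    induction m with
    | zero =>
      intro w hwim h
      simp only [Nat.cast_zero] at h
      exact tendsto_digamma_seq_of_one_lt_re (by linarith)
    | succ m ih =>
      intro w hwim h
      have hwim1 : (w+1).im ≠ 0 := by simpa using hwim
      have hIH := ih (w+1) hwim1 (by rw [Complex.add_re, Complex.one_re]; push_cast at h ⊢; linarith)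
      rw [digamma_add_one hwim] at hIH
      have hw0 : w ≠ 0 := by intro hz; apply hwim; rw [hz]; simp
      -- inverse tail tendsto 0
      have hinv : Tendsto (fun n : ℕ => (w + 1 + (n:ℕ))⁻¹) atTop (𝓝 0) := by
        rw [tendsto_zero_iff_norm_tendsto_zero]
        have hb : Tendsto (fun n : ℕ => ((n:ℝ) - ‖w+1‖)⁻¹) atTop (𝓝 0) := by
          apply Tendsto.inv_tendsto_atTop
          exact tendsto_atTop_add_const_right _ _ tendsto_natCast_atTop_atTop
        apply squeeze_zero' (Eventually.of_forall fun n => norm_nonneg _) _ hb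
        filter_upwards [eventually_gt_atTop (Nat.ceil (‖w+1‖ + 1))] with n hn
        have hgt : ‖w+1‖ + 1 ≤ (n:ℝ) := by
          calc ‖w+1‖ + 1 ≤ (Nat.ceil (‖w+1‖+1) : ℝ) := Nat.le_ceil _
            _ ≤ (n:ℝ) := by exact_mod_cast (Nat.le_of_lt hn)
        have hlow : (n:ℝ) - ‖w+1‖ ≤ ‖w + 1 + (n:ℕ)‖ := by
          have htr : ‖(n:ℂ)‖ - ‖w+1‖ ≤ ‖w + 1 + (n:ℕ)‖ := by
            have h1 : ‖(n:ℂ)‖ ≤ ‖w + 1 + (n:ℕ)‖ + ‖w+1‖ := by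
              calc ‖(n:ℂ)‖ = ‖(w + 1 + (n:ℕ)) - (w+1)‖ := by ring_nf
                _ ≤ ‖w + 1 + (n:ℕ)‖ + ‖w+1‖ := norm_sub_le _ _
            linarith
          simpa using htr
        rw [norm_inv]
        apply inv_anti₀ (by linarith) hlow
      have hkey : ∀ n : ℕ, Complex.log n - ∑ j ∈ Finset.range (n+1), (w + (j:ℕ))⁻¹
          = (Complex.log n - ∑ j ∈ Finset.range (n+1), (w + 1 + (j:ℕ))⁻¹)
            + (w + 1 + (n:ℕ))⁻¹ - w⁻¹ := by
        intro n
        have e1 : ∑ j ∈ Finset.range (n+1), (w + (j:ℕ))⁻¹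
            = (∑ j ∈ Finset.range n, (w + ((j:ℕ)+1:ℕ))⁻¹) + (w + ((0:ℕ):ℂ))⁻¹ :=
          Finset.sum_range_succ' (fun j => (w + (j:ℕ))⁻¹) n
        have e2 : ∑ j ∈ Finset.range (n+1), (w + 1 + (j:ℕ))⁻¹
            = (∑ j ∈ Finset.range n, (w + 1 + (j:ℕ))⁻¹) + (w + 1 + (n:ℕ))⁻¹ :=
          Finset.sum_range_succ _ n
        have e3 : ∀ j : ℕ, (w + ((j:ℕ)+1:ℕ) : ℂ) = w + 1 + (j:ℕ) := by
          intro j; push_cast; ring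
        rw [e1, e2]
        simp_rw [e3]
        push_cast
        ring
      have := (hIH.add hinv).sub_const w⁻¹
      simp only [add_zero, add_sub_cancel_right] at this
      apply Tendsto.congr (fun n => (hkey n).symm) ?_
      convert this using 2
  exact claim m w hw hm

lemma tendsto_re_digamma {w : ℂ} (hw : w.im ≠ 0) :
    Tendsto (fun n : ℕ => Real.log n - ∑ j ∈ Finset.range (n+1),
        (w.re + j) / ((w.re + j)^2 + w.im^2)) atTop (𝓝 ((_root_.digamma w).re)) := by
  have h := (Complex.continuous_re.tendsto _).comp (tendsto_digamma_seq hw)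
  apply h.congr
  intro n
  simp only [Function.comp_apply, Complex.sub_re]
  congr 1
  · rw [Complex.log_re]
    simp
  · rw [Complex.re_sum]
    apply Finset.sum_congr rfl
    intro j _
    rw [Complex.inv_re, Complex.normSq_apply]
    simp only [Complex.add_re, Complex.add_im, Complex.natCast_re, Complex.natCast_im, add_zero]
    ring_nf

/-- Main lower bound via case data: if the _root_.digamma real-part sequence converges to `L`,
then `L` is at least an explicit constant. -/

lemma limit_ge_of_data {x y L : ℝ} (hy : 16 ≤ y^2) (m : ℕ) (e : ℝ)
    (he : x + m = e) (he0 : 0 ≤ e) (NB B5 : ℝ)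
    (hneg : ∑ j ∈ Finset.range m, (x+j)/((x+j)^2+y^2) ≤ NB)
    (hmid : ∑ i ∈ Finset.range 5, (e+i)/((e+i)^2+y^2) ≤ B5)
    (hlim : Tendsto (fun n : ℕ => Real.log n - ∑ j ∈ Finset.range (n+1),
        (x + j) / ((x + j)^2 + y^2)) atTop (𝓝 L)) :
    Real.log ((e+4)^2+16)/2 - NB - B5 ≤ L := by
  set C : ℝ := Real.log ((e+4)^2+16)/2 - NB - B5 with hC
  have hrn := tendsto_log_ratio x
  have hcn : Tendsto (fun n : ℕ => C + (Real.log n - Real.log ((x+n)^2+16) / 2)) atTop (𝓝 C) := by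
    have := (tendsto_const_nhds (x := C) (f := atTop (α := ℕ))).add hrn
    simpa using this
  apply le_of_tendsto_of_tendsto hcn hlim
  filter_upwards [eventually_ge_atTop (m+5)] with n hn
  show C + (Real.log n - Real.log ((x+n)^2+16) / 2)
      ≤ Real.log n - ∑ j ∈ Finset.range (n+1), (x + j) / ((x + j)^2 + y^2)
  have key : ∑ j ∈ Finset.range (n+1), (x+j)/((x+j)^2+y^2)
      ≤ NB + B5 + (Real.log ((x+n)^2+16) - Real.log ((e+4)^2+16))/2 := by
    have hsplit1 : ∑ j ∈ Finset.range (n+1), (x+j)/((x+j)^2+y^2)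
        = (∑ j ∈ Finset.range m, (x+j)/((x+j)^2+y^2))
          + (∑ j ∈ Finset.Ico m (m+5), (x+j)/((x+j)^2+y^2))
          + (∑ j ∈ Finset.Ico (m+5) (n+1), (x+j)/((x+j)^2+y^2)) := by
      rw [Finset.range_eq_Ico,
        ← Finset.sum_Ico_consecutive _ (Nat.zero_le (m+5)) (by omega : m+5 ≤ n+1),
        ← Finset.sum_Ico_consecutive _ (Nat.zero_le m) (by omega : m ≤ m+5),
        ← Finset.range_eq_Ico]
    have hmid' : ∑ j ∈ Finset.Ico m (m+5), (x+j)/((x+j)^2+y^2) ≤ B5 := by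
      rw [Finset.sum_Ico_eq_sum_range]
      simp only [Nat.add_sub_cancel_left]
      have hcongr : ∀ i ∈ Finset.range 5,
          (x + ((m+i:ℕ)):ℝ)/((x + ((m+i:ℕ)):ℝ)^2+y^2) = (e+i)/((e+i)^2+y^2) := by
        intro i _
        push_cast
        rw [show x + ((m:ℝ)+i) = e + i by rw [← he]; ring]
      rw [Finset.sum_congr rfl hcongr]
      exact hmid
    have htail : ∑ j ∈ Finset.Ico (m+5) (n+1), (x+j)/((x+j)^2+y^2)
        ≤ (Real.log ((x+n)^2+16) - Real.log ((e+4)^2+16))/2 := by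
      rw [Finset.sum_Ico_eq_sum_range]
      have hN : n + 1 - (m+5) = n - m - 4 := by omega
      rw [hN]
      set N := n - m - 4 with hNdef
      have step1 : ∑ i ∈ Finset.range N, (x+((m+5+i:ℕ)):ℝ)/((x+((m+5+i:ℕ)):ℝ)^2+y^2)
          ≤ ∑ i ∈ Finset.range N, fcomp ((e+4) + 1 + i) := by
        apply Finset.sum_le_sum
        intro i _
        have harg : x + ((m+5+i:ℕ):ℝ) = (e+4) + 1 + i := by push_cast; rw [← he]; ring
        rw [harg]
        exact g_le_f hy (by positivity)
      have step2 := fcomp_tail (show (4:ℝ) ≤ e + 4 by linarith) N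
      have hcN : ((N:ℕ):ℝ) = (n:ℝ) - m - 4 := by
        rw [hNdef, Nat.cast_sub (by omega : 4 ≤ n - m), Nat.cast_sub (by omega : m ≤ n)]
        norm_num
      have harg2 : (e + 4) + (N:ℝ) = x + n := by
        rw [hcN, ← he]; ring
      calc ∑ i ∈ Finset.range N, (x+((m+5+i:ℕ)):ℝ)/((x+((m+5+i:ℕ)):ℝ)^2+y^2)
          ≤ ∑ i ∈ Finset.range N, fcomp ((e+4) + 1 + i) := step1
        _ ≤ (Real.log (((e+4)+N)^2+16) - Real.log ((e+4)^2+16)) / 2 := step2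
        _ = (Real.log ((x+n)^2+16) - Real.log ((e+4)^2+16))/2 := by rw [harg2]
    rw [hsplit1]
    linarith
  rw [hC]
  linarith

end Aux

section Main
open Complex Real Filter Topology Set MeasureTheory

lemma fcomp_def (u : ℝ) : fcomp u = u / (u^2+16) := rfl

/-- expand the 5-term mid sum -/

lemma mid_sum_le {e y : ℝ} (hy : 16 ≤ y^2) (he0 : 0 ≤ e) {c0 c1 c2 c3 c4 : ℝ}
    (h0 : fcomp e ≤ c0) (h1 : fcomp (e+1) ≤ c1) (h2 : fcomp (e+2) ≤ c2)
    (h3 : fcomp (e+3) ≤ c3) (h4 : fcomp (e+4) ≤ c4) :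
    ∑ i ∈ Finset.range 5, (e+i)/((e+i)^2+y^2) ≤ c0+c1+c2+c3+c4 := by
  rw [Finset.sum_range_succ, Finset.sum_range_succ, Finset.sum_range_succ,
    Finset.sum_range_succ, Finset.sum_range_one]
  push_cast
  have g0 : e/(e^2+y^2) ≤ c0 := by
    have h := (g_le_f hy (by linarith : (0:ℝ) ≤ e))
    rw [← fcomp_def] at h
    exact h.trans h0
  have g1 : (e+1)/((e+1)^2+y^2) ≤ c1 := by
    have h := (g_le_f hy (by linarith : (0:ℝ) ≤ e+1))
    rw [← fcomp_def] at h
    exact h.trans h1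
  have g2 : (e+2)/((e+2)^2+y^2) ≤ c2 := by
    have h := (g_le_f hy (by linarith : (0:ℝ) ≤ e+2))
    rw [← fcomp_def] at h
    exact h.trans h2
  have g3 : (e+3)/((e+3)^2+y^2) ≤ c3 := by
    have h := (g_le_f hy (by linarith : (0:ℝ) ≤ e+3))
    rw [← fcomp_def] at h
    exact h.trans h3
  have g4 : (e+4)/((e+4)^2+y^2) ≤ c4 := by
    have h := (g_le_f hy (by linarith : (0:ℝ) ≤ e+4))
    rw [← fcomp_def] at h
    exact h.trans h4
  have : e + (0:ℝ) = e := by ring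
  rw [this]
  linarith

theorem re_extra_terms_pos (s : ℂ) (hre : s.re < 1 / 2) (him : 8 ≤ |s.im|) :
    0 < (1 / (s - 1) + (1 / 2 : ℂ) * _root_.digamma (s / 2 + 1)).re
          - (1 / 2) * Real.log π := by
  set z : ℂ := s / 2 + 1 with hzdef
  have hsre2 : (s/2).re = s.re/2 := by
    rw [show (2:ℂ) = ((2:ℝ):ℂ) by norm_num, Complex.div_ofReal_re]
  have hsim2 : (s/2).im = s.im/2 := by
    rw [show (2:ℂ) = ((2:ℝ):ℂ) by norm_num, Complex.div_ofReal_im]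
  set x : ℝ := z.re with hxdef
  set y : ℝ := z.im with hydef
  have hxval : x = s.re/2 + 1 := by rw [hxdef, hzdef, Complex.add_re, Complex.one_re, hsre2]
  have hyval : y = s.im/2 := by rw [hydef, hzdef, Complex.add_im, Complex.one_im, hsim2, add_zero]
  have hy2 : 16 ≤ y^2 := by
    have h64 : (64:ℝ) ≤ s.im^2 := by
      have h8 := pow_le_pow_left₀ (by norm_num : (0:ℝ) ≤ 8) him 2
      rw [_root_.sq_abs] at h8
      norm_num at h8
      linarith
    rw [hyval]
    nlinarith
  have hy2pos : (0:ℝ) < y^2 := by linarith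
  have hyne : y ≠ 0 := by intro h; rw [h] at hy2pos; norm_num at hy2pos
  have hx54 : x < 5/4 := by rw [hxval]; linarith
  set v : ℝ := 3/2 - x with hvdef
  have hv0 : (0:ℝ) < v := by rw [hvdef]; linarith
  have hvy : (0:ℝ) < v^2 + y^2 := by positivity
  have hA : (s-1).re = -2*v := by
    rw [Complex.sub_re, Complex.one_re, hvdef]
    have hs : s.re = 2*x - 2 := by rw [hxval]; ring
    rw [hs]; ring
  have hB : (s-1).im = 2*y := by
    rw [Complex.sub_im, Complex.one_im, hyval]; ring
  have hterm1 : (1/(s-1)).re = -(v/(v^2+y^2))/2 := by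
    rw [one_div, Complex.inv_re, Complex.normSq_apply, hA, hB]
    have h4 : (-2*v)*(-2*v) + 2*y*(2*y) = 4*(v^2+y^2) := by ring
    rw [h4]
    field_simp
    ring
  have hterm2 : ((1/2 : ℂ) * _root_.digamma z).re = (_root_.digamma z).re/2 := by
    rw [show (1/2 : ℂ) = ((1/2 : ℝ):ℂ) by norm_num, Complex.re_ofReal_mul]
    ring
  rw [Complex.add_re, hterm1, hterm2]
  have hzim : z.im ≠ 0 := hyne
  have hlim := tendsto_re_digamma hzim
  have hpi := logpi_ub
  have main : Real.log π + v/(v^2+y^2) < (_root_.digamma z).re := by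
    rcases lt_or_ge x 0 with hxneg | hx0
    · -- CASE C : x < 0
      set m : ℕ := ⌈-x⌉₊ with hmdef
      set e : ℝ := x + m with hedef
      have hm1 : 1 ≤ m := by
        rw [hmdef]
        refine Nat.one_le_iff_ne_zero.mpr ?_
        intro h
        have := Nat.ceil_eq_zero.mp h
        linarith
      have he0 : 0 ≤ e := by
        have := Nat.le_ceil (-x)
        rw [hedef]; push_cast; linarith
      have he1 : e < 1 := by
        have := Nat.ceil_lt_add_one (show (0:ℝ) ≤ -x by linarith)
        rw [hedef]; push_cast; linarith
      have he : x + (m:ℝ) = e := hedef.symm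
      set gneg : ℝ := (-x)/((-x)^2+y^2) with hgnegdef
      have hneg : ∑ j ∈ Finset.range m, (x+j)/((x+j)^2+y^2) ≤ -gneg := by
        obtain ⟨k, hk⟩ : ∃ k, m = k+1 := ⟨m-1, by omega⟩
        rw [hk, Finset.sum_range_succ' (fun j => (x+(j:ℕ))/((x+(j:ℕ))^2+y^2)) k]
        have hz0 : (x+((0:ℕ):ℝ))/((x+((0:ℕ):ℝ))^2+y^2) = -gneg := by
          rw [hgnegdef]
          push_cast
          rw [add_zero, neg_div, neg_sq, neg_neg]
        simp only [Nat.cast_zero] at hz0 ⊢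
        rw [hz0]
        have hrest : ∑ j ∈ Finset.range k, (x+((j:ℕ)+1:ℝ))/((x+((j:ℕ)+1:ℝ))^2+y^2) ≤ 0 := by
          apply Finset.sum_nonpos
          intro j hj
          apply g_nonpos hy2
          have hjk : (j:ℝ)+1 ≤ (k:ℝ) := by
            exact_mod_cast Nat.succ_le_of_lt (Finset.mem_range.mp hj)
          have hek : x + ((k:ℝ)+1) = e := by
            rw [← he, hk]; push_cast; ring
          linarith
        have hcast : ∀ j : ℕ, (x+((j+1:ℕ)):ℝ)/((x+((j+1:ℕ)):ℝ)^2+y^2)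
            = (x+((j:ℕ)+1:ℝ))/((x+((j:ℕ)+1:ℝ))^2+y^2) := by
          intro j; push_cast; ring_nf
        simp only [hcast]
        linarith
      have hpair : v/(v^2+y^2) ≤ gneg + 3/32 := by
        have hp := g_pair hy2 (show (0:ℝ) ≤ -x by linarith) (show (0:ℝ) ≤ (3/2:ℝ) by norm_num)
        rw [show -x + 3/2 = v by rw [hvdef]; ring] at hp
        have h32 : (3/2)/y^2 ≤ 3/32 := by
          rw [div_le_div_iff₀ hy2pos (by norm_num)]
          linarith
        rw [hgnegdef]
        linarith
      rcases le_or_gt e (1/2) with he12 | he12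
      · -- C1 : e ≤ 1/2
        have hmid := mid_sum_le hy2 he0
          (show fcomp e ≤ 2/65 by
            calc fcomp e ≤ fcomp (1/2) := fcomp_mono he0 he12 (by norm_num)
              _ = 2/65 := by rw [fcomp_def]; norm_num)
          (show fcomp (e+1) ≤ 6/73 by
            calc fcomp (e+1) ≤ fcomp (3/2) := fcomp_mono (by linarith) (by linarith) (by norm_num)
              _ = 6/73 := by rw [fcomp_def]; norm_num)
          (show fcomp (e+2) ≤ 10/89 by
            calc fcomp (e+2) ≤ fcomp (5/2) := fcomp_mono (by linarith) (by linarith) (by norm_num)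
              _ = 10/89 := by rw [fcomp_def]; norm_num)
          (show fcomp (e+3) ≤ 14/113 by
            calc fcomp (e+3) ≤ fcomp (7/2) := fcomp_mono (by linarith) (by linarith) (by norm_num)
              _ = 14/113 := by rw [fcomp_def]; norm_num)
          (show fcomp (e+4) ≤ 1/8 from fcomp_le_eighth _)
        have hL := limit_ge_of_data hy2 m e he he0 (-gneg) (2/65+6/73+10/89+14/113+1/8)
          hneg hmid hlim
        have hlog : Real.log 32 ≤ Real.log ((e+4)^2+16) :=
          Real.log_le_log (by norm_num) (by nlinarith)
        have hnum : (1.14501:ℝ) + 3/32 + (2/65+6/73+10/89+14/113+1/8) < 3.46573590/2 := by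
          norm_num
        have h32 := L32_lb
        linarith
      · -- C2 : 1/2 < e < 1
        have hmid := mid_sum_le hy2 he0
          (show fcomp e ≤ 1/17 by
            calc fcomp e ≤ fcomp 1 := fcomp_mono he0 he1.le (by norm_num)
              _ = 1/17 := by rw [fcomp_def]; norm_num)
          (show fcomp (e+1) ≤ 1/10 by
            calc fcomp (e+1) ≤ fcomp 2 := fcomp_mono (by linarith) (by linarith) (by norm_num)
              _ = 1/10 := by rw [fcomp_def]; norm_num)
          (show fcomp (e+2) ≤ 3/25 by
            calc fcomp (e+2) ≤ fcomp 3 := fcomp_mono (by linarith) (by linarith) (by norm_num)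
              _ = 3/25 := by rw [fcomp_def]; norm_num)
          (show fcomp (e+3) ≤ 1/8 from fcomp_le_eighth _)
          (show fcomp (e+4) ≤ 1/8 from fcomp_le_eighth _)
        have hL := limit_ge_of_data hy2 m e he he0 (-gneg) (1/17+1/10+3/25+1/8+1/8)
          hneg hmid hlim
        have hlog : Real.log 36.25 ≤ Real.log ((e+4)^2+16) :=
          Real.log_le_log (by norm_num) (by nlinarith)
        have hnum : (1.14501:ℝ) + 3/32 + (1/17+1/10+3/25+1/8+1/8) < 3.58297/2 := by
          norm_num
        have h36 := L3625_lb
        linarith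
    · -- m = 0 cases
      have he : x + ((0:ℕ):ℝ) = x := by push_cast; ring
      have hneg : ∑ j ∈ Finset.range 0, (x+j)/((x+j)^2+y^2) ≤ 0 := by simp
      rcases lt_or_ge x (1/2) with hxB | hxA
      · -- CASE B : 0 ≤ x < 1/2
        have hmid := mid_sum_le hy2 hx0
          (show fcomp x ≤ 2/65 by
            calc fcomp x ≤ fcomp (1/2) := fcomp_mono hx0 hxB.le (by norm_num)
              _ = 2/65 := by rw [fcomp_def]; norm_num)
          (show fcomp (x+1) ≤ 6/73 by
            calc fcomp (x+1) ≤ fcomp (3/2) := fcomp_mono (by linarith) (by linarith) (by norm_num)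
              _ = 6/73 := by rw [fcomp_def]; norm_num)
          (show fcomp (x+2) ≤ 10/89 by
            calc fcomp (x+2) ≤ fcomp (5/2) := fcomp_mono (by linarith) (by linarith) (by norm_num)
              _ = 10/89 := by rw [fcomp_def]; norm_num)
          (show fcomp (x+3) ≤ 14/113 by
            calc fcomp (x+3) ≤ fcomp (7/2) := fcomp_mono (by linarith) (by linarith) (by norm_num)
              _ = 14/113 := by rw [fcomp_def]; norm_num)
          (show fcomp (x+4) ≤ 1/8 from fcomp_le_eighth _)
        have hL := limit_ge_of_data hy2 0 x he hx0 0 (2/65+6/73+10/89+14/113+1/8)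
          hneg hmid hlim
        have hlog : Real.log 32 ≤ Real.log ((x+4)^2+16) :=
          Real.log_le_log (by norm_num) (by nlinarith)
        have hgv : v/(v^2+y^2) ≤ 6/73 := by
          have h := g_le_f hy2 hv0.le
          rw [← fcomp_def] at h
          calc v/(v^2+y^2) ≤ fcomp v := h
            _ ≤ fcomp (3/2) := fcomp_mono hv0.le (by rw [hvdef]; linarith) (by norm_num)
            _ = 6/73 := by rw [fcomp_def]; norm_num
        have hnum : (1.14501:ℝ) + 6/73 + (2/65+6/73+10/89+14/113+1/8) < 3.46573590/2 := by
          norm_num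
        have h32 := L32_lb
        linarith
      · -- CASE A : 1/2 ≤ x < 5/4
        have hmid := mid_sum_le hy2 hx0
          (show fcomp x ≤ 20/281 by
            calc fcomp x ≤ fcomp (5/4) := fcomp_mono hx0 hx54.le (by norm_num)
              _ = 20/281 := by rw [fcomp_def]; norm_num)
          (show fcomp (x+1) ≤ 36/337 by
            calc fcomp (x+1) ≤ fcomp (9/4) := fcomp_mono (by linarith) (by linarith) (by norm_num)
              _ = 36/337 := by rw [fcomp_def]; norm_num)
          (show fcomp (x+2) ≤ 52/425 by
            calc fcomp (x+2) ≤ fcomp (13/4) := fcomp_mono (by linarith) (by linarith) (by norm_num)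
              _ = 52/425 := by rw [fcomp_def]; norm_num)
          (show fcomp (x+3) ≤ 1/8 from fcomp_le_eighth _)
          (show fcomp (x+4) ≤ 1/8 from fcomp_le_eighth _)
        have hL := limit_ge_of_data hy2 0 x he hx0 0 (20/281+36/337+52/425+1/8+1/8)
          hneg hmid hlim
        have hlog : Real.log 36.25 ≤ Real.log ((x+4)^2+16) :=
          Real.log_le_log (by norm_num) (by nlinarith)
        have hgv : v/(v^2+y^2) ≤ 1/17 := by
          have h := g_le_f hy2 hv0.le
          rw [← fcomp_def] at h
          calc v/(v^2+y^2) ≤ fcomp v := h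
            _ ≤ fcomp 1 := fcomp_mono hv0.le (by rw [hvdef]; linarith) (by norm_num)
            _ = 1/17 := by rw [fcomp_def]; norm_num
        have hnum : (1.14501:ℝ) + 1/17 + (20/281+36/337+52/425+1/8+1/8) < 3.58297/2 := by
          norm_num
        have h36 := L3625_lb
        linarith
  linarith

end Main
end

section
/- For every s = σ + it with t ≥ 0.1, one has |Re(Ψ(s)) - Re(Ψ(1-s))| < 3π·e^{-2πt}. -/
open Complex Real

private theorem keyineq (x y r : ℝ) (hr : 0 < r) (hr3 : r^2 < 1/3) (hc : x^2 + y^2 = r^2) :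
    |2*y / ((x-1)^2 + y^2)| < 3*r := by
  have hr1 : r < 1 := by nlinarith
  have hDpos : 0 < (x-1)^2+y^2 := by nlinarith [sq_nonneg (x+r), sq_nonneg (x-r)]
  rw [abs_div, abs_of_pos hDpos, div_lt_iff₀ hDpos]
  have h2 : |2*y| = 2*|y| := by rw [abs_mul]; simp
  rw [h2]
  have hY2 : x^2 + |y|^2 = r^2 := by rw [_root_.sq_abs]; exact hc
  have hcs : |y| * (1-r^2) ≤ r*(1 + r^2 - 2*x) := by
    set A := 2*r*x + (1-r^2)*|y| with hA
    set B := r*(1+r^2) with hB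
    have hBpos : 0 ≤ B := by positivity
    have hA2B2 : A^2 ≤ B^2 := by
      have hid : B^2 - A^2 = ((1-r^2)*x - 2*r*|y|)^2 + (1+r^2)^2*(r^2 - x^2 - |y|^2) := by
        rw [hA, hB]; ring
      nlinarith [sq_nonneg ((1-r^2)*x - 2*r*|y|)]
    have hAB : A ≤ B := by nlinarith
    nlinarith
  have hD : (x-1)^2 + y^2 = 1 + r^2 - 2*x := by nlinarith
  rw [hD]
  nlinarith [mul_pos hr (hD ▸ hDpos), mul_le_mul_of_nonneg_left hcs (le_of_lt (show (0:ℝ) < 2 by norm_num))]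

private theorem sin_pi_mul_ne_zero_of_im (s : ℂ) (hs : s.im ≠ 0) : Complex.sin (π * s) ≠ 0 := by
  rw [Complex.sin_ne_zero_iff]
  intro k h
  apply hs
  have := congrArg Complex.im h
  simpa [Real.pi_ne_zero] using this

private theorem digamma_reflect (s : ℂ) (hs : s.im ≠ 0) :
    _root_.digamma s - _root_.digamma (1 - s) = -(π : ℂ) * Complex.cos (π * s) / Complex.sin (π * s) := by
  have hpi : (π : ℂ) ≠ 0 := Complex.ofReal_ne_zero.2 Real.pi_ne_zero
  have hsin : Complex.sin (π * s) ≠ 0 := sin_pi_mul_ne_zero_of_im s hs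
  have hint1 : ∀ m : ℕ, s ≠ -m := by
    intro m h
    apply hs; rw [h]; simp
  have hint2 : ∀ m : ℕ, (1 - s) ≠ -m := by
    intro m h
    apply hs
    have := congrArg Complex.im h
    simpa using this
  have hG1 : Complex.Gamma s ≠ 0 := Complex.Gamma_ne_zero hint1
  have hG2 : Complex.Gamma (1 - s) ≠ 0 := Complex.Gamma_ne_zero hint2
  have hd1 : HasDerivAt Complex.Gamma (deriv Complex.Gamma s) s :=
    (Complex.differentiableAt_Gamma s hint1).hasDerivAt
  have hd2 : HasDerivAt (fun z => Complex.Gamma (1 - z))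
      (deriv Complex.Gamma (1 - s) * (-1)) s := by
    have hinner : HasDerivAt (fun z : ℂ => 1 - z) (-1) s := by
      simpa using (hasDerivAt_id s).const_sub 1
    exact ((Complex.differentiableAt_Gamma (1 - s) hint2).hasDerivAt).comp s hinner
  have hF : HasDerivAt (fun z => Complex.Gamma z * Complex.Gamma (1 - z))
      (deriv Complex.Gamma s * Complex.Gamma (1 - s) +
        Complex.Gamma s * (deriv Complex.Gamma (1 - s) * (-1))) s := hd1.mul hd2
  have hsd : HasDerivAt (fun z : ℂ => Complex.sin (π * z)) (Complex.cos (π * s) * π) s := by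
    have hinner : HasDerivAt (fun z : ℂ => (π : ℂ) * z) π s := by
      simpa using (hasDerivAt_id s).const_mul (π : ℂ)
    exact (Complex.hasDerivAt_sin (π * s)).comp s hinner
  have hGfun : HasDerivAt (fun z : ℂ => (π : ℂ) / Complex.sin (π * z))
      ((0 * Complex.sin (π * s) - (π : ℂ) * (Complex.cos (π * s) * π)) /
        Complex.sin (π * s) ^ 2) s :=
    (hasDerivAt_const s (π : ℂ)).div hsd hsin
  have hfun : (fun z => Complex.Gamma z * Complex.Gamma (1 - z)) =
      fun z : ℂ => (π : ℂ) / Complex.sin (π * z) :=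
    funext fun z => Complex.Gamma_mul_Gamma_one_sub z
  rw [hfun] at hF
  have heq := hF.unique hGfun
  have hrefl := Complex.Gamma_mul_Gamma_one_sub s
  unfold _root_.digamma
  rw [div_sub_div _ _ hG1 hG2]
  rw [hrefl]
  have hsin' : Complex.sin (s*π) ≠ 0 := by rwa [mul_comm] at hsin
  field_simp at heq ⊢
  linear_combination heq

private theorem cot_eq (s : ℂ) (hsin : Complex.sin (π*s) ≠ 0) :
    -(π:ℂ) * Complex.cos (π*s) / Complex.sin (π*s)
      = -(π:ℂ) * (Complex.I * (Complex.exp (2*π*s*Complex.I) + 1) /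
          (Complex.exp (2*π*s*Complex.I) - 1)) := by
  set a : ℂ := Complex.exp (π*s*Complex.I) with ha
  have hane : a ≠ 0 := Complex.exp_ne_zero _
  have hw2 : Complex.exp (2*π*s*Complex.I) = a^2 := by
    rw [ha, sq, ← Complex.exp_add]; congr 1; ring
  have hainv : Complex.exp (-(π*s) * Complex.I) = a⁻¹ := by
    rw [ha, ← Complex.exp_neg]; congr 1; ring
  have hsin_eq : Complex.sin (π*s) * (2*a) = (1 - a^2) * Complex.I := by
    rw [Complex.sin, hainv]; field_simp; ring
  have hcos_eq : Complex.cos (π*s) * (2*a) = a^2 + 1 := by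
    rw [Complex.cos, hainv]; field_simp; ring
  have hwne : a^2 - 1 ≠ 0 := by
    intro h
    apply hsin
    have h2 : Complex.sin (π*s) * (2*a) = 0 := by
      rw [hsin_eq]; linear_combination -Complex.I * h
    simpa [hane] using h2
  have h2a : (2*a : ℂ) ≠ 0 := by simpa using hane
  have hsin2 : Complex.sin (π*s) = (1-a^2)*Complex.I/(2*a) := eq_div_of_mul_eq h2a hsin_eq
  have hcos2 : Complex.cos (π*s) = (a^2+1)/(2*a) := eq_div_of_mul_eq h2a hcos_eq
  rw [hw2, hsin2, hcos2]
  have hI : (1-a^2)*Complex.I ≠ 0 := by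
    simp only [ne_eq, mul_eq_zero, Complex.I_ne_zero, or_false, sub_eq_zero]
    intro h; exact hwne (by rw [← h]; ring)
  field_simp
  ring_nf
  try simp only [Complex.I_sq]
  try ring
  have h1a : (1 - a^2) ≠ 0 := fun h => hwne (by linear_combination -h)
  field_simp
  ring

private theorem re_aux (w : ℂ) :
    (Complex.I * (w+1) / (w-1)).re = 2*w.im/((w.re-1)^2+w.im^2) := by
  simp [Complex.div_re, Complex.normSq_apply]
  ring_nf

theorem abs_re_digamma_sub_digamma_one_sub (s : ℂ) (ht : (0.1 : ℝ) ≤ s.im) :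
    |(_root_.digamma s).re - (_root_.digamma (1 - s)).re| < 3 * π * Real.exp (-2 * π * s.im) := by
  have him : s.im ≠ 0 := by positivity
  have hsin : Complex.sin (π * s) ≠ 0 := sin_pi_mul_ne_zero_of_im s him
  set w : ℂ := Complex.exp (2*π*s*Complex.I) with hw
  set r : ℝ := Real.exp (-2 * π * s.im) with hr
  have hrpos : 0 < r := Real.exp_pos _
  -- |w| = r
  have habs : ‖w‖ = r := by
    rw [hw, Complex.norm_exp, hr]
    congr 1
    simp [Complex.mul_re, Complex.mul_im]
    try ring
  have hc : w.re^2 + w.im^2 = r^2 := by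
    rw [← habs, Complex.sq_norm, Complex.normSq_apply]; ring
  -- r^2 < 1/3
  have hpi1 : (3.1415:ℝ) < π := by linarith [Real.pi_gt_d6]
  have h125 : (1.25:ℝ) ≤ 4*π*s.im := by nlinarith
  have hexp3 : (3:ℝ) < Real.exp (4*π*s.im) := by
    have h1 : Real.exp 1.25 ≤ Real.exp (4*π*s.im) := Real.exp_le_exp.2 h125
    have h2 : Real.exp (1.25:ℝ) = Real.exp 1 * Real.exp 0.25 := by
      rw [← Real.exp_add]; norm_num
    have h3 : (1:ℝ) + 0.25 ≤ Real.exp 0.25 := by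
      simpa [add_comm] using Real.add_one_le_exp (0.25:ℝ)
    have h4 := Real.exp_one_gt_d9
    nlinarith [Real.exp_pos (0.25:ℝ)]
  have hr3 : r^2 < 1/3 := by
    rw [hr, sq, ← Real.exp_add]
    have he : -2*π*s.im + -2*π*s.im = -(4*π*s.im) := by ring
    rw [he, Real.exp_neg]
    have hpos := Real.exp_pos (4*π*s.im)
    rw [inv_lt_comm₀ hpos (by norm_num : (0:ℝ) < 1/3)]
    norm_num
    exact hexp3
  have hk := keyineq w.re w.im r hrpos hr3 hc
  -- rewrite the difference
  have key : _root_.digamma s - _root_.digamma (1 - s)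
      = -(π:ℂ) * (Complex.I * (w + 1) / (w - 1)) := by
    rw [digamma_reflect s him, cot_eq s hsin, hw]
  have hre : ((_root_.digamma s) - _root_.digamma (1 - s)).re
      = -π * (2*w.im/((w.re-1)^2+w.im^2)) := by
    rw [key, show (-(π:ℂ)) = ((-π : ℝ) : ℂ) by push_cast; ring,
      Complex.re_ofReal_mul, re_aux]
  rw [← Complex.sub_re, hre, abs_mul, abs_neg, abs_of_pos Real.pi_pos]
  calc π * |2*w.im/((w.re-1)^2+w.im^2)| < π * (3*r) :=
        mul_lt_mul_of_pos_left hk Real.pi_pos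
    _ = 3 * π * r := by ring
end
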